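/- arXiv:1906.07105 — 3 statements merged into one kernel-verified Lean document; each statement's English description precedes it below -/
import Mathlib

section
/- Consider a Markov chain on states {0,1,...,K} with transition probabilities: from state i with 0<i<K, move to i+1 with probability 1/2 and to i-1 with probability 1/2; from state K move to state K-l with probability 1/2 and to K-1 with probability 1/2; from state 0 move to state l with probability 1/2 and to state 1 with probability 1/2, where 1 ≤ l ≤ K-l. Then the vector π with π_i = (i+1)/((l+1)(K+1-l)) for i < l, π_i = (l+1)/((l+1)(K+1-l)) for l ≤ i ≤ K-l, and π_i = (K-i+1)/((l+1)(K+1-l)) for i > K-l, is a stationary distribution: it is nonnegative, sums to 1, and satisfies π P = π. -/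
set_option maxHeartbeats 4000000

open Finset in
private lemma sum_ite_point' (n : ℕ) (c : ℕ → Prop) [DecidablePred c] (f : ℕ → ℚ)
    (i0 : ℕ) (h : ∀ i, c i → i = i0) :
    ∑ i ∈ range n, (if c i then f i else 0) = if i0 < n ∧ c i0 then f i0 else 0 := by
  by_cases hc : i0 < n ∧ c i0
  · rw [if_pos hc, Finset.sum_eq_single_of_mem i0 (mem_range.2 hc.1)]
    · exact if_pos hc.2
    · intro b _ hb
      exact if_neg fun hcb => hb (h b hcb)
  · rw [if_neg hc]
    apply Finset.sum_eq_zero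
    intro i hi
    apply if_neg
    intro hci
    have := h i hci
    subst this
    exact hc ⟨mem_range.1 hi, hci⟩

private lemma gauss1' (n : ℕ) : ∑ i ∈ Finset.range n, ((i:ℚ)+1) = n*(n+1)/2 := by
  induction n with
  | zero => simp
  | succ n ih => rw [Finset.sum_range_succ, ih]; push_cast; ring

private lemma gauss2' (n : ℕ) : ∑ i ∈ Finset.range n, (i:ℚ) = n*(n-1)/2 := by
  induction n with
  | zero => simp
  | succ n ih => rw [Finset.sum_range_succ, ih]; push_cast; ring

/-- Lemma 1 of the 2D framework: the explicit piecewise vector is a stationary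
distribution of the Markov chain with `p = 1/2` and jump parameter `l`. -/
theorem stmt_0 (K l : ℕ) (hl : 1 ≤ l) (hlK : 2 * l ≤ K)
    (π : ℕ → ℚ) (P : ℕ → ℕ → ℚ)
    (hπ : ∀ i, π i =
      (if i < l then (i : ℚ) + 1
       else if i ≤ K - l then (l : ℚ) + 1
       else (K : ℚ) - i + 1) / (((l : ℚ) + 1) * ((K : ℚ) + 1 - l)))
    (hP : ∀ i j, P i j =
      (if 0 < i ∧ i < K ∧ j = i + 1 then (1 : ℚ)/2 else 0) +
      (if 0 < i ∧ i < K ∧ j = i - 1 then (1 : ℚ)/2 else 0) +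
      (if i = K ∧ j = K - l then (1 : ℚ)/2 else 0) +
      (if i = K ∧ j = K - 1 then (1 : ℚ)/2 else 0) +
      (if i = 0 ∧ j = l then (1 : ℚ)/2 else 0) +
      (if i = 0 ∧ j = 1 then (1 : ℚ)/2 else 0)) :
    (∀ i, i ≤ K → 0 ≤ π i) ∧
    (∑ i ∈ Finset.range (K + 1), π i = 1) ∧
    (∀ j, j ≤ K → ∑ i ∈ Finset.range (K + 1), π i * P i j = π j) := by
  open Finset in
  refine ⟨?_, ?_, ?_⟩
  · intro i hi
    rw [hπ i]
    have h1 : (i:ℚ) ≤ K := by exact_mod_cast hi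
    have h2 : (1:ℚ) ≤ l := by exact_mod_cast hl
    have h3 : 2*(l:ℚ) ≤ K := by exact_mod_cast hlK
    apply div_nonneg
    · split_ifs
      · positivity
      · positivity
      · linarith
    · have h4 : (0:ℚ) ≤ (K:ℚ)+1-l := by linarith
      exact mul_nonneg (by positivity) h4
  · have hlQ : (1:ℚ) ≤ l := by exact_mod_cast hl
    have hlKQ : 2 * (l:ℚ) ≤ K := by exact_mod_cast hlK
    have hD : (((l:ℚ) + 1) * ((K:ℚ) + 1 - l)) ≠ 0 := by
      apply mul_ne_zero <;> nlinarith
    set num : ℕ → ℚ := fun i =>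
        (if i < l then (i : ℚ) + 1
         else if i ≤ K - l then (l : ℚ) + 1
         else (K : ℚ) - i + 1) with hnum
    have h1 : ∑ i ∈ Finset.range (K + 1), π i
        = (∑ i ∈ Finset.range (K + 1), num i) / (((l:ℚ) + 1) * ((K:ℚ) + 1 - l)) := by
      rw [Finset.sum_div]
      exact Finset.sum_congr rfl fun i _ => hπ i
    rw [h1]
    have key : ∑ i ∈ Finset.range (K + 1), num i = ((l:ℚ) + 1) * ((K:ℚ) + 1 - l) := by
      have split1 : Finset.range (K+1) = Finset.Ico 0 l ∪ Finset.Ico l (K+1) := by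
        rw [Finset.range_eq_Ico, Finset.Ico_union_Ico_eq_Ico (Nat.zero_le l) (by omega)]
      have split2 : Finset.Ico l (K+1) = Finset.Ico l (K-l+1) ∪ Finset.Ico (K-l+1) (K+1) := by
        rw [Finset.Ico_union_Ico_eq_Ico (by omega) (by omega)]
      have hdisj1 : Disjoint (Finset.Ico 0 l) (Finset.Ico l (K+1)) :=
        Finset.Ico_disjoint_Ico_consecutive 0 l (K+1)
      have hdisj2 : Disjoint (Finset.Ico l (K-l+1)) (Finset.Ico (K-l+1) (K+1)) :=
        Finset.Ico_disjoint_Ico_consecutive l (K-l+1) (K+1)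
      rw [split1, Finset.sum_union hdisj1, split2, Finset.sum_union hdisj2]
      have c1 : ∑ i ∈ Finset.Ico 0 l, num i = (l:ℚ)*(l+1)/2 := by
        rw [← gauss1' l, ← Finset.range_eq_Ico]
        refine Finset.sum_congr rfl fun i hi => ?_
        rw [hnum]
        simp only [if_pos (Finset.mem_range.1 hi)]
      have c2 : ∑ i ∈ Finset.Ico l (K-l+1), num i = ((K:ℚ)+1-2*l) * ((l:ℚ)+1) := by
        have : ∀ i ∈ Finset.Ico l (K-l+1), num i = (l:ℚ)+1 := by
          intro i hi
          rw [Finset.mem_Ico] at hi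
          rw [hnum]
          simp only
          rw [if_neg (by omega), if_pos (by omega)]
        rw [Finset.sum_congr rfl this, Finset.sum_const, Nat.card_Ico, nsmul_eq_mul]
        have h1 : (K - l + 1 - l) + 2*l = K + 1 := by omega
        have h2 := congrArg (Nat.cast : ℕ → ℚ) h1
        push_cast at h2
        have h3 : ((K - l + 1 - l : ℕ):ℚ) = (K:ℚ)+1-2*l := by linarith
        rw [h3]
      have c3 : ∑ i ∈ Finset.Ico (K-l+1) (K+1), num i = (l:ℚ)*(l+1)/2 := by
        have hc : ∀ i ∈ Finset.Ico (K-l+1) (K+1), num i = (K:ℚ) - i + 1 := by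
          intro i hi
          rw [Finset.mem_Ico] at hi
          rw [hnum]; simp only
          rw [if_neg (by omega), if_neg (by omega)]
        rw [Finset.sum_congr rfl hc, Finset.sum_Ico_eq_sum_range]
        have hr : K + 1 - (K - l + 1) = l := by omega
        rw [hr]
        have hKl : ((K - l : ℕ):ℚ) = (K:ℚ) - l := by
          have h4 := congrArg (Nat.cast : ℕ → ℚ) (by omega : (K - l) + l = K)
          push_cast at h4; linarith
        have hterm : ∀ i ∈ Finset.range l, ((K:ℚ) - ↑(K - l + 1 + i) + 1) = (l:ℚ) - i := by
          intro i _
          push_cast [hKl]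
          ring
        rw [Finset.sum_congr rfl hterm, Finset.sum_sub_distrib, gauss2', Finset.sum_const,
          Finset.card_range, nsmul_eq_mul]
        ring
      rw [c1, c2, c3]; ring
    rw [key, div_self hD]
  · intro j hj
    have hlQ : (1:ℚ) ≤ l := by exact_mod_cast hl
    have hlKQ : 2 * (l:ℚ) ≤ K := by exact_mod_cast hlK
    have hD : (((l:ℚ) + 1) * ((K:ℚ) + 1 - l)) ≠ 0 := by
      apply mul_ne_zero <;> nlinarith
    have step1 : ∑ i ∈ range (K+1), π i * P i j =
        (∑ i ∈ range (K+1), if 0 < i ∧ i < K ∧ j = i+1 then π i * ((1:ℚ)/2) else 0) +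
        (∑ i ∈ range (K+1), if 0 < i ∧ i < K ∧ j = i-1 then π i * ((1:ℚ)/2) else 0) +
        (∑ i ∈ range (K+1), if i = K ∧ j = K-l then π i * ((1:ℚ)/2) else 0) +
        (∑ i ∈ range (K+1), if i = K ∧ j = K-1 then π i * ((1:ℚ)/2) else 0) +
        (∑ i ∈ range (K+1), if i = 0 ∧ j = l then π i * ((1:ℚ)/2) else 0) +
        (∑ i ∈ range (K+1), if i = 0 ∧ j = 1 then π i * ((1:ℚ)/2) else 0) := by
      rw [← Finset.sum_add_distrib, ← Finset.sum_add_distrib, ← Finset.sum_add_distrib,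
        ← Finset.sum_add_distrib, ← Finset.sum_add_distrib]
      refine Finset.sum_congr rfl fun i _ => ?_
      rw [hP]
      simp only [mul_add, mul_ite, mul_zero]
    have e1 : ∑ i ∈ range (K+1), (if 0 < i ∧ i < K ∧ j = i+1 then π i * ((1:ℚ)/2) else 0)
        = if 2 ≤ j ∧ j ≤ K then π (j-1) * ((1:ℚ)/2) else 0 := by
      rw [sum_ite_point' _ _ _ (j-1) (by intro i hi; omega)]
      exact if_congr (by omega) rfl rfl
    have e2 : ∑ i ∈ range (K+1), (if 0 < i ∧ i < K ∧ j = i-1 then π i * ((1:ℚ)/2) else 0)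
        = if j + 1 < K then π (j+1) * ((1:ℚ)/2) else 0 := by
      rw [sum_ite_point' _ _ _ (j+1) (by intro i hi; omega)]
      exact if_congr (by omega) rfl rfl
    have e3 : ∑ i ∈ range (K+1), (if i = K ∧ j = K-l then π i * ((1:ℚ)/2) else 0)
        = if j = K - l then π K * ((1:ℚ)/2) else 0 := by
      rw [sum_ite_point' _ _ _ K (fun i hi => hi.1)]
      exact if_congr (by omega) rfl rfl
    have e4 : ∑ i ∈ range (K+1), (if i = K ∧ j = K-1 then π i * ((1:ℚ)/2) else 0)
        = if j = K - 1 then π K * ((1:ℚ)/2) else 0 := by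
      rw [sum_ite_point' _ _ _ K (fun i hi => hi.1)]
      exact if_congr (by omega) rfl rfl
    have e5 : ∑ i ∈ range (K+1), (if i = 0 ∧ j = l then π i * ((1:ℚ)/2) else 0)
        = if j = l then π 0 * ((1:ℚ)/2) else 0 := by
      rw [sum_ite_point' _ _ _ 0 (fun i hi => hi.1)]
      exact if_congr (by omega) rfl rfl
    have e6 : ∑ i ∈ range (K+1), (if i = 0 ∧ j = 1 then π i * ((1:ℚ)/2) else 0)
        = if j = 1 then π 0 * ((1:ℚ)/2) else 0 := by
      rw [sum_ite_point' _ _ _ 0 (fun i hi => hi.1)]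
      exact if_congr (by omega) rfl rfl
    have hπ0 : π 0 = 1 / (((l:ℚ) + 1) * ((K:ℚ) + 1 - l)) := by
      rw [hπ 0, if_pos (by omega)]
      norm_num
    have hπK : π K = 1 / (((l:ℚ) + 1) * ((K:ℚ) + 1 - l)) := by
      rw [hπ K, if_neg (by omega), if_neg (by omega)]
      ring_nf
    rw [step1, e1, e2, e3, e4, e5, e6, hπ (j-1), hπ (j+1), hπK, hπ0, hπ j]
    have hite : ∀ (C : Prop) [inst : Decidable C] (x : ℚ),
        (if C then x / (((l:ℚ)+1)*((K:ℚ)+1-l)) * ((1:ℚ)/2) else 0)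
          = (if C then x else 0) / (2*(((l:ℚ)+1)*((K:ℚ)+1-l))) := by
      intro C inst x
      split_ifs
      · rw [div_mul_div_comm, mul_one, mul_comm (((l:ℚ)+1)*((K:ℚ)+1-l)) 2]
      · simp
    simp only [hite]
    rw [← add_div, ← add_div, ← add_div, ← add_div,
      ← add_div]
    have hcancel : ∀ x y : ℚ, x = 2*y →
        x / (2*(((l:ℚ)+1)*((K:ℚ)+1-l))) = y / (((l:ℚ)+1)*((K:ℚ)+1-l)) := by
      intro x y h
      rw [h, mul_div_mul_left _ _ (two_ne_zero)]
    apply hcancel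
    clear hπ hP hlQ hlKQ hD hite hcancel step1 e1 e2 e3 e4 e5 e6 hπ0 hπK
    obtain ⟨a, rfl⟩ : ∃ a, l = a+1 := ⟨l-1, by omega⟩
    obtain ⟨b, rfl⟩ : ∃ b, K = 2*(a+1)+b := ⟨K-2*(a+1), by omega⟩
    have hs1 : 2*(a+1)+b - (a+1) = a+1+b := by omega
    have hs2 : 2*(a+1)+b - 1 = 2*a+1+b := by omega
    rw [hs1, hs2]
    rcases j with _ | m
    · split_ifs <;> first
        | (exfalso; omega)
        | (exfalso; tauto)
        | (push_cast; ring1)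
        | (simp only [Nat.lt_iff_add_one_le, Nat.not_lt, Nat.not_le] at *;
           qify at *; push_cast at *; linarith)
    · rw [Nat.add_sub_cancel]
      split_ifs <;> first
        | (exfalso; omega)
        | (exfalso; tauto)
        | (push_cast; ring1)
        | (simp only [Nat.lt_iff_add_one_le, Nat.not_lt, Nat.not_le] at *;
           qify at *; push_cast at *; linarith)
        | (obtain rfl : m = 2*a+1+b := (by omega); push_cast; ring1)
        | (obtain rfl : m = 2*a+1+b := (by omega); obtain rfl : a = 0 := (by omega);
           push_cast; ring1)
end

section
/- Let depth, width be positive naturals, K = depth·width, and p ∈ [0,1]. Define E = ∑_{f=0}^{width-1} (width/(width-f)) · (2p/(K+1)). Then E ≤ (ln(width) + 1)·(1/depth)·2p. In particular, with p = 1/2, the expected number of hops of a Put operation is at most (ln(width) + 1)/depth. -/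
/-- Bound on the expected number of hops of a `Put` operation:
`E = ∑_{f<width} (width/(width-f))·(2p/(K+1)) ≤ (ln width + 1)·(1/depth)·2p`
where `K = depth·width`. -/
theorem stmt_5 (depth width : ℕ) (hd : 1 ≤ depth) (hw : 1 ≤ width)
    (K : ℕ) (hK : K = depth * width) (p : ℝ) (hp0 : 0 ≤ p) (hp1 : p ≤ 1) :
    ∑ f ∈ Finset.range width,
        ((width : ℝ) / ((width : ℝ) - (f : ℝ))) * (2 * p / ((K : ℝ) + 1)) ≤
      (Real.log width + 1) * (1 / (depth : ℝ)) * (2 * p) := by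
  have hwpos : (0:ℝ) < width := by exact_mod_cast hw
  have hdpos : (0:ℝ) < depth := by exact_mod_cast hd
  have hsum : ∑ f ∈ Finset.range width, ((width : ℝ) / ((width : ℝ) - (f : ℝ)))
      = (width : ℝ) * (harmonic width : ℝ) := by
    rw [← Finset.sum_range_reflect]
    have : ∀ j ∈ Finset.range width,
        ((width : ℝ) / ((width : ℝ) - ((width - 1 - j : ℕ) : ℝ)))
        = (width : ℝ) * (1 / ((j : ℝ) + 1)) := by
      intro j hj
      rw [Finset.mem_range] at hj
      have h1 : ((width - 1 - j : ℕ) : ℝ) = (width : ℝ) - 1 - j := by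
        have : width - 1 - j + (j + 1) = width := by omega
        have := congrArg (fun n : ℕ => (n : ℝ)) this
        push_cast at this
        linarith
      rw [h1]
      have h2 : (width:ℝ) - ((width:ℝ) - 1 - j) = (j:ℝ) + 1 := by ring
      rw [h2, mul_one_div]
    rw [Finset.sum_congr rfl this, ← Finset.mul_sum]
    congr 1
    rw [harmonic]
    push_cast
    simp [one_div]
  rw [← Finset.sum_mul, hsum, hK]
  have hH0 : (0:ℝ) ≤ (harmonic width : ℝ) := by
    have := (harmonic_pos (n := width) (by omega)).le; exact_mod_cast this
  have hHle : (harmonic width : ℝ) ≤ 1 + Real.log width := harmonic_le_one_add_log width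
  have hKlb : (depth : ℝ) * width ≤ ((depth * width : ℕ) : ℝ) + 1 := by
    push_cast; linarith
  have h2p : (0:ℝ) ≤ 2 * p := by linarith
  have hKpos : (0:ℝ) < ((depth * width : ℕ) : ℝ) + 1 := by positivity
  calc (width : ℝ) * (harmonic width : ℝ) * (2 * p / (((depth * width : ℕ) : ℝ) + 1))
      ≤ (width : ℝ) * (harmonic width : ℝ) * (2 * p / ((depth : ℝ) * width)) := by
        apply mul_le_mul_of_nonneg_left _ (by positivity)
        apply div_le_div_of_nonneg_left h2p (by positivity) hKlb
    _ = (harmonic width : ℝ) * (1 / (depth : ℝ)) * (2 * p) := by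
        field_simp
    _ ≤ (Real.log width + 1) * (1 / (depth : ℝ)) * (2 * p) := by
        apply mul_le_mul_of_nonneg_right _ h2p
        apply mul_le_mul_of_nonneg_right _ (by positivity)
        linarith
end

section
/- Let depth, width be positive naturals and K = depth·width. With the uniform distribution π_i = 1/K on states {1,...,K}, and expected hop count width/(width - f) in the state i = (f+1)·depth for f = 0,...,width-1 (and 0 in all other states), the overall expected number of hops ∑_{f=0}^{width-1} (1/K)·(width/(width-f)) is at most (ln(width) + 1)/depth. -/
/-- 2Dd-Queue step complexity: the overall expected number of hops is at most
`(ln width + 1)/depth`, where `K = depth·width`. -/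
theorem stmt_14 (depth width : ℕ) (hd : 1 ≤ depth) (hw : 1 ≤ width)
    (K : ℕ) (hK : K = depth * width) :
    ∑ f ∈ Finset.range width,
        (1 / (K : ℝ)) * ((width : ℝ) / ((width : ℝ) - (f : ℝ))) ≤
      (Real.log width + 1) / (depth : ℝ) := by
  have hd' : (0:ℝ) < depth := by exact_mod_cast hd
  have hw' : (0:ℝ) < width := by exact_mod_cast hw
  have key : ∑ f ∈ Finset.range width,
      (1 / (K : ℝ)) * ((width : ℝ) / ((width : ℝ) - (f : ℝ)))
      = (1 / (depth : ℝ)) * ((harmonic width : ℚ) : ℝ) := by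
    unfold harmonic
    push_cast
    rw [← Finset.sum_range_reflect]
    rw [Finset.mul_sum]
    apply Finset.sum_congr rfl
    intro f hf
    simp only [Finset.mem_range] at hf
    have h1 : ((width : ℝ) - ((width - 1 - f : ℕ) : ℝ)) = (f : ℝ) + 1 := by
      have : width - 1 - f = width - (f + 1) := by omega
      rw [this]
      have : ((width - (f+1) : ℕ) : ℝ) = (width : ℝ) - ((f:ℕ) + 1) := by
        push_cast [Nat.cast_sub (by omega : f + 1 ≤ width)]; ring
      rw [this]; push_cast; ring
    rw [h1, hK]
    field_simp
    push_cast
    ring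
  rw [key]
  have hb := harmonic_le_one_add_log width
  calc (1 / (depth:ℝ)) * ((harmonic width : ℚ) : ℝ)
      ≤ (1 / (depth:ℝ)) * (1 + Real.log width) := by
        apply mul_le_mul_of_nonneg_left hb (by positivity)
    _ = (Real.log width + 1) / depth := by ring
end
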